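/- Assume the Trudinger–Moser property holds with some constant ω ∈ (0,π] and that f satisfies hypotheses (H). Then there exist ρ > 0 and a > 0 such that φ(u) ≥ a for every u ∈ X with ‖u‖_X = ρ. -/
import Mathlib


open MeasureTheory Real Set Filter Topology

set_option maxHeartbeats 1000000

noncomputable section

/-- Integrand of the squared Gagliardo `H^{1/2}` seminorm on `ℝ`. -/
def gagKer (u : ℝ → ℝ) : ℝ × ℝ → ℝ :=
  fun p => (u p.1 - u p.2) ^ 2 / |p.1 - p.2| ^ 2

/-- Integrand of the Gagliardo inner product `⟨u,v⟩_X`. -/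
def innerKer (u v : ℝ → ℝ) : ℝ × ℝ → ℝ :=
  fun p => (u p.1 - u p.2) * (v p.1 - v p.2) / |p.1 - p.2| ^ 2

/-- `u ∈ H^{1/2}(ℝ)` : `u ∈ L²(ℝ)` with finite Gagliardo seminorm. -/
def memH (u : ℝ → ℝ) : Prop :=
  Measurable u ∧ Integrable (fun x => (u x) ^ 2) ∧ Integrable (gagKer u)

/-- Squared Gagliardo seminorm `[u]²`. -/
def gagSq (u : ℝ → ℝ) : ℝ := ∫ p : ℝ × ℝ, gagKer u p

/-- Gagliardo seminorm `[u]`, i.e. the norm `‖u‖_X`. -/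
def gagNorm (u : ℝ → ℝ) : ℝ := Real.sqrt (gagSq u)

/-- Inner product `⟨u, v⟩_X`. -/
def innerX (u v : ℝ → ℝ) : ℝ := ∫ p : ℝ × ℝ, innerKer u v p

/-- `u ∈ X` : `u ∈ H^{1/2}(ℝ)` and `u = 0` a.e. outside `(0,1)`. -/
def memX (u : ℝ → ℝ) : Prop :=
  memH u ∧ ∀ᵐ x : ℝ, x ∉ Ioo (0 : ℝ) 1 → u x = 0

/-- `λ₁ = inf {[u]² : u ∈ X, ‖u‖_{L²(0,1)} = 1}`. -/
def lam1 : ℝ :=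
  sInf { t : ℝ | ∃ u : ℝ → ℝ, memX u ∧ (∫ x in Ioo (0 : ℝ) 1, (u x) ^ 2) = 1 ∧ gagSq u = t }

/-- Trudinger–Moser property with constant `ω`. -/
def TMprop (ω : ℝ) : Prop :=
  ∀ α : ℝ, 0 < α → α < 2 * π * ω →
    ∃ K : ℝ, 0 < K ∧ ∀ u : ℝ → ℝ, memX u → gagNorm u ≤ 1 →
      (∫⁻ x in Ioo (0 : ℝ) 1, ENNReal.ofReal (exp (α * (u x) ^ 2))) ≤ ENNReal.ofReal K

/-- The primitive `F(t) = ∫₀ᵗ f(τ) dτ`. -/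
def primF (f : ℝ → ℝ) : ℝ → ℝ := fun t => ∫ τ in (0 : ℝ)..t, f τ

/-- Hypotheses (H). -/
def HypH (f : ℝ → ℝ) : Prop :=
  Continuous f ∧ f 0 = 0 ∧
  (∃ t₀ > (0 : ℝ), ∃ M > (0 : ℝ),
    ∀ t : ℝ, t₀ ≤ |t| → 0 < primF f t ∧ primF f t ≤ M * |f t|) ∧
  (∀ t : ℝ, t ≠ 0 → 0 < 2 * primF f t ∧ 2 * primF f t ≤ f t * t) ∧
  (Filter.limsup (fun t => primF f t / t ^ 2) (𝓝[≠] (0 : ℝ)) < lam1 / (4 * π)) ∧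
  (∀ α : ℝ, 0 < α →
    Filter.Tendsto (fun t => |f t| * exp (-α * t ^ 2)) (Filter.cocompact ℝ) (𝓝 0))

/-- Hypotheses (H') with Trudinger–Moser constant `ω`. -/
def HypH' (f : ℝ → ℝ) (ω : ℝ) : Prop :=
  Continuous f ∧ f 0 = 0 ∧
  (∃ t₀ > (0 : ℝ), ∃ M > (0 : ℝ),
    ∀ t : ℝ, t₀ ≤ |t| → 0 < primF f t ∧ primF f t ≤ M * |f t|) ∧
  (∀ t : ℝ, t ≠ 0 → 0 < 2 * primF f t ∧ 2 * primF f t ≤ f t * t) ∧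
  (Filter.limsup (fun t => primF f t / t ^ 2) (𝓝[≠] (0 : ℝ)) < lam1 / (4 * π)) ∧
  ∃ α₀ : ℝ, 0 < α₀ ∧ α₀ < 2 * π * ω ∧
    (∀ α : ℝ, 0 < α → α < α₀ →
      Filter.Tendsto (fun t => |f t| * exp (-α * t ^ 2)) (Filter.cocompact ℝ) Filter.atTop) ∧
    (∀ α : ℝ, α₀ < α →
      Filter.Tendsto (fun t => |f t| * exp (-α * t ^ 2)) (Filter.cocompact ℝ) (𝓝 0)) ∧
    ∃ ψ : ℝ → ℝ, memX ψ ∧ gagNorm ψ = 1 ∧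
      ∃ b : ℝ, b < ω / (2 * α₀) ∧ ∀ t : ℝ, 0 < t →
        t ^ 2 / (4 * π) - (∫ x in Ioo (0 : ℝ) 1, primF f (t * ψ x)) ≤ b

/-- `u` is a (weak) solution of `(-Δ)^{1/2} u = f(u)` in `(0,1)`, `u = 0` outside. -/
def IsWeakSolution (f u : ℝ → ℝ) : Prop :=
  memX u ∧ ∀ v : ℝ → ℝ, memX v →
    IntegrableOn (fun x => f (u x) * v x) (Ioo (0 : ℝ) 1) ∧
    innerX u v / (2 * π) = ∫ x in Ioo (0 : ℝ) 1, f (u x) * v x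

/-- The energy functional `φ(u) = ‖u‖_X²/(4π) - ∫₀¹ F(u) dx`. -/
def phi (f u : ℝ → ℝ) : ℝ :=
  gagSq u / (4 * π) - ∫ x in Ioo (0 : ℝ) 1, primF f (u x)

/-- `⟨φ'(u), v⟩ = (1/(2π))⟨u,v⟩_X - ∫₀¹ f(u) v dx`. -/
def phiDeriv (f u v : ℝ → ℝ) : ℝ :=
  innerX u v / (2 * π) - ∫ x in Ioo (0 : ℝ) 1, f (u x) * v x

/-- The Palais–Smale condition at level `c`. -/
def PalaisSmaleAt (f : ℝ → ℝ) (c : ℝ) : Prop :=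
  ∀ u : ℕ → ℝ → ℝ, (∀ n, memX (u n)) →
    Filter.Tendsto (fun n => phi f (u n)) Filter.atTop (𝓝 c) →
    (∃ ε : ℕ → ℝ, Filter.Tendsto ε Filter.atTop (𝓝 0) ∧
      ∀ n, ∀ v : ℝ → ℝ, memX v → gagNorm v ≤ 1 → |phiDeriv f (u n) v| ≤ ε n) →
    ∃ w : ℝ → ℝ, memX w ∧ ∃ g : ℕ → ℕ, StrictMono g ∧
      Filter.Tendsto (fun k => gagNorm (fun x => u (g k) x - w x)) Filter.atTop (𝓝 0)


/-! ### Auxiliary lemmas for statement12 -/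

lemma aux_gagKer_nonneg (u : ℝ → ℝ) (p : ℝ × ℝ) : 0 ≤ gagKer u p :=
  div_nonneg (sq_nonneg _) (sq_nonneg _)

lemma aux_gagSq_nonneg (u : ℝ → ℝ) : 0 ≤ gagSq u :=
  integral_nonneg (aux_gagKer_nonneg u)

lemma aux_gagKer_smul (c : ℝ) (u : ℝ → ℝ) :
    gagKer (fun x => c * u x) = fun p => c ^ 2 * gagKer u p := by
  funext p
  unfold gagKer
  rw [← mul_sub, mul_pow, mul_div_assoc]

lemma aux_gagSq_smul (c : ℝ) (u : ℝ → ℝ) :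
    gagSq (fun x => c * u x) = c ^ 2 * gagSq u := by
  unfold gagSq
  rw [aux_gagKer_smul, MeasureTheory.integral_const_mul]

lemma aux_memX_smul (c : ℝ) {u : ℝ → ℝ} (hu : memX u) : memX (fun x => c * u x) := by
  obtain ⟨⟨hm, hL2, hker⟩, hzero⟩ := hu
  refine ⟨⟨hm.const_mul c, ?_, ?_⟩, ?_⟩
  · have h : (fun x => (c * u x) ^ 2) = fun x => c ^ 2 * (u x) ^ 2 := by
      funext x; ring
    rw [h]; exact hL2.const_mul _
  · rw [aux_gagKer_smul]; exact hker.const_mul _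
  · filter_upwards [hzero] with x hx hnx
    rw [hx hnx, mul_zero]

lemma aux_lam1_le {u : ℝ → ℝ} (hu : memX u)
    (h1 : (∫ x in Ioo (0 : ℝ) 1, (u x) ^ 2) = 1) : lam1 ≤ gagSq u := by
  apply csInf_le
  · refine ⟨0, ?_⟩
    rintro t ⟨v, -, -, rfl⟩
    exact aux_gagSq_nonneg v
  · exact ⟨u, hu, h1, rfl⟩

lemma aux_primF_continuous (f : ℝ → ℝ) (hf : Continuous f) : Continuous (primF f) :=
  intervalIntegral.continuous_primitive (fun a b => hf.intervalIntegrable a b) 0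

lemma aux_primF_nonneg (f : ℝ → ℝ)
    (hii : ∀ t : ℝ, t ≠ 0 → 0 < 2 * primF f t ∧ 2 * primF f t ≤ f t * t) :
    ∀ t : ℝ, 0 ≤ primF f t := by
  intro t
  rcases eq_or_ne t 0 with rfl | h
  · simp [primF]
  · linarith [(hii t h).1]

lemma aux_cube (η s : ℝ) (hη : 0 < η) :
    |s| ^ 3 ≤ exp (9 / (4 * η)) * exp (η * s ^ 2) := by
  have h0 : |s| ≤ exp |s| := by linarith [Real.add_one_le_exp |s|]
  have h1 : |s| ^ 3 ≤ exp (3 * |s|) := by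
    calc |s| ^ 3 ≤ (exp |s|) ^ 3 := pow_le_pow_left₀ (abs_nonneg s) h0 3
      _ = exp (3 * |s|) := by
          rw [show (3 : ℝ) * |s| = (3 : ℕ) * |s| by norm_num, Real.exp_nat_mul]
  have h2 : 3 * |s| ≤ 9 / (4 * η) + η * s ^ 2 := by
    rw [← sub_nonneg]
    have hrw : 9 / (4 * η) + η * s ^ 2 - 3 * |s| =
        (9 + 4 * η ^ 2 * s ^ 2 - 12 * η * |s|) / (4 * η) := by
      field_simp; ring
    rw [hrw]
    apply div_nonneg _ (by positivity)
    nlinarith [sq_nonneg (2 * η * |s| - 3), sq_abs s]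
  calc |s| ^ 3 ≤ exp (3 * |s|) := h1
    _ ≤ exp (9 / (4 * η) + η * s ^ 2) := exp_le_exp.2 h2
    _ = exp (9 / (4 * η)) * exp (η * s ^ 2) := Real.exp_add _ _

lemma aux_bdd (f : ℝ → ℝ) (hf : Continuous f)
    (hii : ∀ t : ℝ, t ≠ 0 → 0 < 2 * primF f t ∧ 2 * primF f t ≤ f t * t) :
    ∃ B : ℝ, ∀ᶠ t in 𝓝[≠] (0 : ℝ), primF f t / t ^ 2 ≤ B := by
  have hF : ∀ t : ℝ, HasDerivAt (primF f) (f t) t := fun t =>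
    intervalIntegral.integral_hasDerivAt_right (hf.intervalIntegrable _ _)
      (hf.stronglyMeasurableAtFilter _ _) hf.continuousAt
  have hg' : ∀ t : ℝ, t ≠ 0 →
      HasDerivAt (fun t => primF f t / t ^ 2)
        ((f t * t ^ 2 - primF f t * ((2 : ℕ) * t ^ 1)) / (t ^ 2) ^ 2) t := by
    intro t ht
    exact (hF t).div (hasDerivAt_pow 2 t) (pow_ne_zero 2 ht)
  have hmono : MonotoneOn (fun t => primF f t / t ^ 2) (Ioi (0 : ℝ)) := by
    apply monotoneOn_of_deriv_nonneg (convex_Ioi 0)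
    · intro t ht
      exact ((hg' t (ne_of_gt ht)).continuousAt).continuousWithinAt
    · intro t ht
      rw [interior_Ioi] at ht
      exact ((hg' t (ne_of_gt ht)).differentiableAt).differentiableWithinAt
    · intro t ht
      rw [interior_Ioi] at ht
      rw [(hg' t (ne_of_gt ht)).deriv]
      apply div_nonneg _ (by positivity)
      have h2 := (hii t (ne_of_gt ht)).2
      have h3 : 0 ≤ t * (f t * t - 2 * primF f t) :=
        mul_nonneg ht.le (by linarith)
      push_cast
      nlinarith [h3]
  have hanti : AntitoneOn (fun t => primF f t / t ^ 2) (Iio (0 : ℝ)) := by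
    apply antitoneOn_of_deriv_nonpos (convex_Iio 0)
    · intro t ht
      exact ((hg' t (ne_of_lt ht)).continuousAt).continuousWithinAt
    · intro t ht
      rw [interior_Iio] at ht
      exact ((hg' t (ne_of_lt ht)).differentiableAt).differentiableWithinAt
    · intro t ht
      rw [interior_Iio] at ht
      rw [(hg' t (ne_of_lt ht)).deriv]
      apply div_nonpos_of_nonpos_of_nonneg _ (by positivity)
      have h2 := (hii t (ne_of_lt ht)).2
      have h3 : t * (f t * t - 2 * primF f t) ≤ 0 :=
        mul_nonpos_of_nonpos_of_nonneg ht.le (by linarith)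
      push_cast
      nlinarith [h3]
  refine ⟨max (primF f 1 / 1 ^ 2) (primF f (-1) / (-1) ^ 2), ?_⟩
  rw [eventually_nhdsWithin_iff]
  filter_upwards [Ioo_mem_nhds (by norm_num : (-1 : ℝ) < 0) (by norm_num : (0 : ℝ) < 1)]
    with t ht hne
  have hne' : t ≠ 0 := hne
  rcases hne'.lt_or_gt with h | h
  · exact le_trans
      (hanti (show (-1 : ℝ) ∈ Iio 0 by norm_num) (show t ∈ Iio 0 from h)
        (by linarith [ht.1]))
      (le_max_right _ _)
  · exact le_trans
      (hmono (show t ∈ Ioi 0 from h) (show (1 : ℝ) ∈ Ioi 0 by norm_num)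
        (le_of_lt ht.2))
      (le_max_left _ _)

lemma aux_small (f : ℝ → ℝ) (hf : Continuous f)
    (hii : ∀ t : ℝ, t ≠ 0 → 0 < 2 * primF f t ∧ 2 * primF f t ≤ f t * t)
    (hiii : Filter.limsup (fun t => primF f t / t ^ 2) (𝓝[≠] (0 : ℝ)) < lam1 / (4 * π)) :
    0 < lam1 ∧ ∃ c₀ : ℝ, 0 < c₀ ∧ c₀ < lam1 / (4 * π) ∧
      ∃ δ > (0 : ℝ), ∀ t : ℝ, |t| ≤ δ → primF f t ≤ c₀ * t ^ 2 := by
  obtain ⟨B, hB⟩ := aux_bdd f hf hii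
  set g : ℝ → ℝ := fun t => primF f t / t ^ 2 with hg
  have hbdd : IsBoundedUnder (· ≤ ·) (𝓝[≠] (0 : ℝ)) g := ⟨B, eventually_map.2 hB⟩
  have hpos : ∀ᶠ t in 𝓝[≠] (0 : ℝ), 0 < g t := by
    filter_upwards [self_mem_nhdsWithin] with t ht
    have ht' : t ≠ 0 := ht
    have ht2 : (0 : ℝ) < t ^ 2 := (sq_nonneg t).lt_of_ne (Ne.symm (pow_ne_zero 2 ht'))
    exact div_pos (by linarith [(hii t ht').1]) ht2
  have hL0 : 0 ≤ Filter.limsup g (𝓝[≠] (0 : ℝ)) := by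
    rw [Filter.limsup_eq]
    apply le_csInf ⟨B, hB⟩
    intro b hb
    have hb' : ∀ᶠ t in 𝓝[≠] (0 : ℝ), g t ≤ b := hb
    obtain ⟨t, h1, h2⟩ := (hb'.and hpos).exists
    linarith
  have hπ : (0 : ℝ) < π := Real.pi_pos
  have hlam : 0 < lam1 := by
    have h4 : 0 < lam1 / (4 * π) := lt_of_le_of_lt hL0 hiii
    rcases div_pos_iff.1 h4 with ⟨h, _⟩ | ⟨_, h⟩
    · exact h
    · nlinarith
  refine ⟨hlam, (Filter.limsup g (𝓝[≠] (0 : ℝ)) + lam1 / (4 * π)) / 2, ?_, ?_, ?_⟩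
  · have : 0 < lam1 / (4 * π) := by positivity
    linarith
  · linarith
  · have hlev : ∀ᶠ t in 𝓝[≠] (0 : ℝ),
        g t < (Filter.limsup g (𝓝[≠] (0 : ℝ)) + lam1 / (4 * π)) / 2 :=
      eventually_lt_of_limsup_lt (by linarith) hbdd
    have hq : ∀ᶠ t in 𝓝[≠] (0 : ℝ),
        primF f t ≤ (Filter.limsup g (𝓝[≠] (0 : ℝ)) + lam1 / (4 * π)) / 2 * t ^ 2 := by
      filter_upwards [hlev, self_mem_nhdsWithin] with t h1 h2
      have ht' : t ≠ 0 := h2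
      have ht2 : (0 : ℝ) < t ^ 2 := (sq_nonneg t).lt_of_ne (Ne.symm (pow_ne_zero 2 ht'))
      exact (div_le_iff₀ ht2).1 h1.le
    rw [eventually_nhdsWithin_iff, Metric.eventually_nhds_iff] at hq
    obtain ⟨ε, hε, hq⟩ := hq
    refine ⟨ε / 2, by linarith, ?_⟩
    intro t ht
    rcases eq_or_ne t 0 with rfl | h
    · simp [primF]
    · apply hq
      · rw [Real.dist_eq, sub_zero]; linarith
      · exact h

lemma aux_big (f : ℝ → ℝ) (hf : Continuous f) (α δ : ℝ) (hα : 0 < α) (hδ : 0 < δ)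
    (hi : ∃ t₀ > (0 : ℝ), ∃ M > (0 : ℝ),
      ∀ t : ℝ, t₀ ≤ |t| → 0 < primF f t ∧ primF f t ≤ M * |f t|)
    (hiv : Filter.Tendsto (fun t => |f t| * exp (-α * t ^ 2)) (Filter.cocompact ℝ) (𝓝 0)) :
    ∃ C > (0 : ℝ), ∀ t : ℝ, δ ≤ |t| → primF f t ≤ C * (|t| ^ 3 * exp (α * t ^ 2)) := by
  obtain ⟨t₀, ht₀, M, hM, hi⟩ := hi
  have hev : ∀ᶠ t in Filter.cocompact ℝ, |f t| * exp (-α * t ^ 2) < 1 :=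
    Filter.Tendsto.eventually_lt_const (by norm_num) hiv
  rw [cocompact_eq_atBot_atTop, Filter.eventually_sup] at hev
  obtain ⟨hbot, htop⟩ := hev
  obtain ⟨T₂, hT₂⟩ := Filter.eventually_atTop.1 htop
  obtain ⟨T₁, hT₁⟩ := Filter.eventually_atBot.1 hbot
  set R : ℝ := max t₀ (max (|T₁| + 1) (|T₂| + 1)) with hR
  have hR0 : 0 < R := lt_of_lt_of_le ht₀ (le_max_left _ _)
  have hfR : ∀ t : ℝ, R ≤ |t| → |f t| ≤ exp (α * t ^ 2) := by
    intro t ht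
    have h1 : |f t| * exp (-α * t ^ 2) ≤ 1 := by
      rcases le_or_gt 0 t with h | h
      · apply (hT₂ t ?_).le
        have h2 : |T₂| + 1 ≤ R :=
          le_trans (le_max_right _ _) (le_max_right _ _)
        have h3 : |t| = t := abs_of_nonneg h
        linarith [le_abs_self T₂, h2.trans ht]
      · apply (hT₁ t ?_).le
        have h2 : |T₁| + 1 ≤ R :=
          le_trans (le_max_left _ _) (le_max_right _ _)
        have h3 : |t| = -t := abs_of_neg h
        linarith [neg_le_abs T₁, h2.trans ht]
    have h2 := mul_le_mul_of_nonneg_right h1 (exp_pos (α * t ^ 2)).le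
    rw [mul_assoc, ← Real.exp_add,
      show -α * t ^ 2 + α * t ^ 2 = 0 from by ring, Real.exp_zero,
      mul_one, one_mul] at h2
    exact h2
  obtain ⟨C₁, hC₁⟩ := (isCompact_Icc (a := -R) (b := R)).exists_bound_of_continuousOn
    (aux_primF_continuous f hf).continuousOn
  have hC₁0 : 0 ≤ C₁ :=
    le_trans (norm_nonneg _) (hC₁ 0 ⟨by linarith, by linarith⟩)
  have hMC : 0 < max M C₁ + 1 := by
    have := le_max_left M C₁; linarith
  refine ⟨(max M C₁ + 1) / δ ^ 3, div_pos hMC (by positivity), ?_⟩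
  intro t ht
  have hexp1 : (1 : ℝ) ≤ exp (α * t ^ 2) := Real.one_le_exp (by positivity)
  have hd3 : δ ^ 3 ≤ |t| ^ 3 := pow_le_pow_left₀ hδ.le ht 3
  have hCd : (max M C₁ + 1) / δ ^ 3 * δ ^ 3 = max M C₁ + 1 :=
    div_mul_cancel₀ _ (by positivity)
  have hstep : (max M C₁ + 1) / δ ^ 3 * δ ^ 3 * exp (α * t ^ 2) ≤
      (max M C₁ + 1) / δ ^ 3 * (|t| ^ 3 * exp (α * t ^ 2)) := by
    rw [mul_assoc]
    apply mul_le_mul_of_nonneg_left _ (by positivity)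
    exact mul_le_mul_of_nonneg_right hd3 (exp_pos _).le
  rcases le_or_gt R |t| with h | h
  · have h2 : primF f t ≤ M * exp (α * t ^ 2) :=
      le_trans (hi t (le_trans (le_max_left _ _) h)).2
        (mul_le_mul_of_nonneg_left (hfR t h) hM.le)
    have h3 : M * exp (α * t ^ 2) ≤ (max M C₁ + 1) * exp (α * t ^ 2) := by
      apply mul_le_mul_of_nonneg_right _ (exp_pos _).le
      have := le_max_left M C₁; linarith
    calc primF f t ≤ (max M C₁ + 1) * exp (α * t ^ 2) := le_trans h2 h3
      _ = (max M C₁ + 1) / δ ^ 3 * δ ^ 3 * exp (α * t ^ 2) := by rw [hCd]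
      _ ≤ _ := hstep
  · have hmem : t ∈ Icc (-R) R := by
      have := abs_le.1 h.le
      exact ⟨this.1, this.2⟩
    have h2 : primF f t ≤ C₁ := le_trans (le_abs_self _) (hC₁ t hmem)
    have h3 : C₁ ≤ (max M C₁ + 1) * exp (α * t ^ 2) := by
      have h4 := le_max_right M C₁
      nlinarith [hexp1, hMC]
    calc primF f t ≤ (max M C₁ + 1) * exp (α * t ^ 2) := le_trans h2 h3
      _ = (max M C₁ + 1) / δ ^ 3 * δ ^ 3 * exp (α * t ^ 2) := by rw [hCd]
      _ ≤ _ := hstep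

/-- mountain-pass geometry near zero (Lemma 3.2). -/
theorem statement12 (ω : ℝ) (hω0 : 0 < ω) (hωπ : ω ≤ π) (hTM : TMprop ω)
    (f : ℝ → ℝ) (hf : HypH f) :
    ∃ ρ : ℝ, 0 < ρ ∧ ∃ a : ℝ, 0 < a ∧
      ∀ u : ℝ → ℝ, memX u → gagNorm u = ρ → a ≤ phi f u := by
  obtain ⟨hfc, hf0, hi, hii, hiii, hiv⟩ := hf
  have hπ : (0 : ℝ) < π := Real.pi_pos
  have hπω : 0 < π * ω := mul_pos hπ hω0
  obtain ⟨hlam, c₀, hc₀, hc₀lt, δ, hδ, hsmall⟩ := aux_small f hfc hii hiii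
  obtain ⟨C, hC, hbig⟩ := aux_big f hfc (π * ω / 2) δ (by positivity) hδ hi
    (hiv (π * ω / 2) (by positivity))
  obtain ⟨K, hK, hTMK⟩ := hTM (π * ω) hπω (by nlinarith)
  obtain ⟨C₂, hC₂def⟩ : ∃ y : ℝ, y = exp (9 / (4 * (π * ω / 2))) := ⟨_, rfl⟩
  have hC₂ : 0 < C₂ := hC₂def ▸ exp_pos _
  obtain ⟨ε₁, hε₁def⟩ : ∃ y : ℝ, y = 1 / (4 * π) - c₀ / lam1 := ⟨_, rfl⟩
  have hε₁ : 0 < ε₁ := by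
    have h1 : c₀ / lam1 < 1 / (4 * π) := by
      rw [div_lt_div_iff₀ hlam (by positivity)]
      rw [lt_div_iff₀ (by positivity : (0 : ℝ) < 4 * π)] at hc₀lt
      nlinarith
    rw [hε₁def]; linarith
  obtain ⟨C₃, hC₃def⟩ : ∃ y : ℝ, y = C * C₂ * K := ⟨_, rfl⟩
  have hC₃ : 0 < C₃ := by rw [hC₃def]; positivity
  obtain ⟨ρ, hρdef⟩ : ∃ y : ℝ, y = min 1 (ε₁ / (2 * (C₃ + 1))) := ⟨_, rfl⟩
  have hρpos : 0 < ρ := hρdef ▸ lt_min one_pos (div_pos hε₁ (by nlinarith))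
  have hρne : ρ ≠ 0 := ne_of_gt hρpos
  have hρ1 : ρ ≤ 1 := hρdef ▸ min_le_left _ _
  have hρ2 : ρ ≤ ε₁ / (2 * (C₃ + 1)) := hρdef ▸ min_le_right _ _
  refine ⟨ρ, hρpos, ρ ^ 2 * ε₁ / 2, by positivity, ?_⟩
  intro u hu hρeq
  have hFnn := aux_primF_nonneg f hii
  unfold gagNorm at hρeq
  have hgag : gagSq u = ρ ^ 2 := by
    rw [← hρeq, Real.sq_sqrt (aux_gagSq_nonneg u)]
  obtain ⟨v, hvdef⟩ : ∃ y : ℝ → ℝ, y = fun x => ρ⁻¹ * u x := ⟨_, rfl⟩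
  have hvX : memX v := hvdef ▸ aux_memX_smul ρ⁻¹ hu
  have hvsq : gagSq v = 1 := by
    rw [hvdef, aux_gagSq_smul, hgag]
    field_simp
  have hvnorm : gagNorm v ≤ 1 := by
    unfold gagNorm; rw [hvsq, Real.sqrt_one]
  have hux : ∀ x, u x = ρ * v x := by
    intro x
    simp only [hvdef]
    rw [← mul_assoc, mul_inv_cancel₀ hρne, one_mul]
  have hlin := hTMK v hvX hvnorm
  obtain ⟨E, hEdef⟩ : ∃ y : ℝ → ℝ, y = fun x => exp (π * ω * (v x) ^ 2) := ⟨_, rfl⟩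
  have hEmeas : Measurable E := by
    rw [hEdef]
    exact Real.measurable_exp.comp ((hvX.1.1.pow_const 2).const_mul (π * ω))
  have hEint : IntegrableOn E (Ioo (0 : ℝ) 1) volume := by
    refine ⟨hEmeas.aestronglyMeasurable, ?_⟩
    rw [hasFiniteIntegral_iff_ofReal (ae_of_all _ fun x => ?_)]
    · simp only [hEdef]
      exact lt_of_le_of_lt hlin ENNReal.ofReal_lt_top
    · rw [hEdef]; exact (exp_pos _).le
  have hEle : (∫ x in Ioo (0 : ℝ) 1, E x) ≤ K := by
    rw [integral_eq_lintegral_of_nonneg_ae (ae_of_all _ fun x => ?_)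
      hEmeas.aestronglyMeasurable]
    · apply ENNReal.toReal_le_of_le_ofReal hK.le
      simp only [hEdef]
      exact hlin
    · rw [hEdef]; exact (exp_pos _).le
  have hpoint : ∀ x, primF f (u x) ≤ c₀ * (u x) ^ 2 + (C * C₂ * ρ ^ 3) * E x := by
    intro x
    simp only [hEdef]
    rcases le_or_gt |u x| δ with h | h
    · have h1 := hsmall (u x) h
      have h2 : 0 ≤ C * C₂ * ρ ^ 3 * exp (π * ω * (v x) ^ 2) := by positivity
      linarith
    · have h1 := hbig (u x) h.le
      have habs : |u x| = ρ * |v x| := by rw [hux x, abs_mul, abs_of_pos hρpos]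
      have hts2 : (u x) ^ 2 = ρ ^ 2 * (v x) ^ 2 := by rw [hux x]; ring
      have hρsq : ρ ^ 2 ≤ 1 := by nlinarith
      have hexp1 : exp (π * ω / 2 * (u x) ^ 2) ≤ exp (π * ω / 2 * (v x) ^ 2) := by
        apply exp_le_exp.2
        rw [hts2]
        nlinarith [mul_nonneg hπω.le (mul_nonneg (sub_nonneg.2 hρsq) (sq_nonneg (v x)))]
      have hcube : |v x| ^ 3 ≤ C₂ * exp (π * ω / 2 * (v x) ^ 2) := by
        rw [hC₂def]
        exact aux_cube (π * ω / 2) (v x) (by positivity)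
      have hee : exp (π * ω / 2 * (v x) ^ 2) * exp (π * ω / 2 * (v x) ^ 2) =
          exp (π * ω * (v x) ^ 2) := by
        rw [← Real.exp_add]; congr 1; ring
      have key : |u x| ^ 3 * exp (π * ω / 2 * (u x) ^ 2) ≤
          ρ ^ 3 * (C₂ * exp (π * ω * (v x) ^ 2)) := by
        calc |u x| ^ 3 * exp (π * ω / 2 * (u x) ^ 2)
            = ρ ^ 3 * (|v x| ^ 3 * exp (π * ω / 2 * (u x) ^ 2)) := by rw [habs]; ring
          _ ≤ ρ ^ 3 * (|v x| ^ 3 * exp (π * ω / 2 * (v x) ^ 2)) := by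
              apply mul_le_mul_of_nonneg_left _ (by positivity)
              exact mul_le_mul_of_nonneg_left hexp1 (by positivity)
          _ ≤ ρ ^ 3 * ((C₂ * exp (π * ω / 2 * (v x) ^ 2)) * exp (π * ω / 2 * (v x) ^ 2)) := by
              apply mul_le_mul_of_nonneg_left _ (by positivity)
              exact mul_le_mul_of_nonneg_right hcube (exp_pos _).le
          _ = ρ ^ 3 * (C₂ * exp (π * ω * (v x) ^ 2)) := by
              rw [← hee]; ring
      have h2 := mul_le_mul_of_nonneg_left key hC.le
      have h3 : C * (ρ ^ 3 * (C₂ * exp (π * ω * (v x) ^ 2))) =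
          C * C₂ * ρ ^ 3 * exp (π * ω * (v x) ^ 2) := by ring
      have h4 : 0 ≤ c₀ * (u x) ^ 2 := mul_nonneg hc₀.le (sq_nonneg (u x))
      linarith
  have hu2 : IntegrableOn (fun x => (u x) ^ 2) (Ioo (0 : ℝ) 1) volume :=
    hu.1.2.1.integrableOn
  have hmain : (∫ x in Ioo (0 : ℝ) 1, primF f (u x)) ≤
      c₀ * (ρ ^ 2 / lam1) + (C * C₂ * ρ ^ 3) * K := by
    have hGint : Integrable (fun x => c₀ * (u x) ^ 2 + (C * C₂ * ρ ^ 3) * E x)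
        (volume.restrict (Ioo (0 : ℝ) 1)) :=
      (hu2.const_mul c₀).add (hEint.const_mul _)
    have h1 : (∫ x in Ioo (0 : ℝ) 1, primF f (u x)) ≤
        ∫ x in Ioo (0 : ℝ) 1, (c₀ * (u x) ^ 2 + (C * C₂ * ρ ^ 3) * E x) :=
      integral_mono_of_nonneg (ae_of_all _ fun x => hFnn _) hGint (ae_of_all _ hpoint)
    rw [integral_add (hu2.const_mul c₀) (hEint.const_mul _),
      MeasureTheory.integral_const_mul, MeasureTheory.integral_const_mul] at h1
    have h2 : (∫ x in Ioo (0 : ℝ) 1, (u x) ^ 2) ≤ ρ ^ 2 / lam1 := by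
      obtain ⟨s, hsdef⟩ : ∃ y : ℝ, y = ∫ x in Ioo (0 : ℝ) 1, (u x) ^ 2 := ⟨_, rfl⟩
      rw [← hsdef]
      have hs0 : 0 ≤ s := hsdef ▸
        setIntegral_nonneg measurableSet_Ioo (fun x _ => sq_nonneg _)
      rcases eq_or_lt_of_le hs0 with hcase | hcase
      · rw [← hcase]; positivity
      · have hwX : memX (fun x => (Real.sqrt s)⁻¹ * u x) := aux_memX_smul _ hu
        have hw1 : (∫ x in Ioo (0 : ℝ) 1, ((Real.sqrt s)⁻¹ * u x) ^ 2) = 1 := by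
          have hrw : ∀ x : ℝ, ((Real.sqrt s)⁻¹ * u x) ^ 2 = s⁻¹ * (u x) ^ 2 := by
            intro x; rw [mul_pow, inv_pow, Real.sq_sqrt hs0]
          simp only [hrw]
          rw [MeasureTheory.integral_const_mul, ← hsdef]
          exact inv_mul_cancel₀ (ne_of_gt hcase)
        have hle := aux_lam1_le hwX hw1
        rw [aux_gagSq_smul, inv_pow, Real.sq_sqrt hs0, hgag] at hle
        rw [le_div_iff₀ hlam]
        have h5 := mul_le_mul_of_nonneg_left hle hs0
        rw [← mul_assoc, mul_inv_cancel₀ (ne_of_gt hcase), one_mul] at h5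
        linarith
    have h3 := mul_le_mul_of_nonneg_left h2 hc₀.le
    have h4 := mul_le_mul_of_nonneg_left hEle (by positivity : (0 : ℝ) ≤ C * C₂ * ρ ^ 3)
    linarith
  have hkey : C₃ * ρ ≤ ε₁ / 2 := by
    have hρ2' : ρ * (2 * (C₃ + 1)) ≤ ε₁ := by
      rw [← le_div_iff₀ (by nlinarith : (0 : ℝ) < 2 * (C₃ + 1))]
      exact hρ2
    nlinarith [hρpos.le]
  have hphi : phi f u = ρ ^ 2 / (4 * π) - ∫ x in Ioo (0 : ℝ) 1, primF f (u x) := by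
    unfold phi; rw [hgag]
  rw [hphi]
  have hexp : ρ ^ 2 / (4 * π) - (c₀ * (ρ ^ 2 / lam1) + (C * C₂ * ρ ^ 3) * K) =
      ρ ^ 2 * ε₁ - ρ ^ 2 * (C₃ * ρ) := by
    rw [hε₁def, hC₃def]; ring
  have h6 := mul_le_mul_of_nonneg_left hkey (sq_nonneg ρ)
  linarith [hmain, hexp, h6]
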